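/- For a bounded linear operator A on a complex Hilbert space, w(A) ≤ (1/2)‖A‖ + (1/2)‖A²‖^(1/2), where w is the numerical radius. -/

import Mathlib

open ContinuousLinearMap

/-- The numerical radius $w(T)=\sup\{|\langle Tx,x\rangle| : \|x\|=1\}$. -/
noncomputable def numRadius {H : Type*} [NormedAddCommGroup H] [InnerProductSpace ℂ H]
    (T : H →L[ℂ] H) : ℝ :=
  ⨆ x : {x : H // ‖x‖ = 1}, ‖(inner ℂ (T x.1) x.1 : ℂ)‖

section Helpers

local notation "⟪" x ", " y "⟫" => @inner ℂ _ _ x y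

variable {H : Type*} [NormedAddCommGroup H] [InnerProductSpace ℂ H] [CompleteSpace H]

lemma aux_sa_norm_le (T : H →L[ℂ] H) (hT : IsSelfAdjoint T) {M : ℝ} (hM : 0 ≤ M)
    (h : ∀ x : H, ‖⟪T x, x⟫‖ ≤ M * ‖x‖ ^ 2) : ‖T‖ ≤ M := by
  refine T.opNorm_le_bound hM fun x => ?_
  rcases eq_or_ne (T x) 0 with hx | hx
  · rw [hx, norm_zero]; positivity
  have hTx : (0:ℝ) < ‖T x‖ := norm_pos_iff.mpr hx
  have hx0 : x ≠ 0 := by rintro rfl; simp at hx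
  have hxn : (0:ℝ) < ‖x‖ := norm_pos_iff.mpr hx0
  set y : H := ((‖x‖ / ‖T x‖ : ℝ) : ℂ) • T x with hy
  have hyn : ‖y‖ = ‖x‖ := by
    rw [hy, norm_smul, Complex.norm_real, Real.norm_eq_abs, abs_of_nonneg (by positivity)]
    field_simp
  have hre : (⟪T x, y⟫).re = ‖x‖ * ‖T x‖ := by
    have h1 : ⟪T x, y⟫ = ((‖x‖ / ‖T x‖ : ℝ) : ℂ) * ⟪T x, T x⟫ := by
      rw [hy, inner_smul_right]
    have h2 : (⟪T x, T x⟫).re = ‖T x‖ ^ 2 := by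
      simpa using @inner_self_eq_norm_sq ℂ _ _ _ _ (T x)
    rw [h1, Complex.re_ofReal_mul, h2]
    field_simp
  have e1 : ⟪T (x+y), x+y⟫ - ⟪T (x-y), x-y⟫ = 2*⟪T x, y⟫ + 2*⟪T y, x⟫ := by
    rw [map_add, map_sub, inner_add_left, inner_sub_left, inner_add_right, inner_add_right,
      inner_sub_right, inner_sub_right]
    ring
  have e2 : (⟪T y, x⟫).re = (⟪T x, y⟫).re := by
    have h1 : ⟪T y, x⟫ = ⟪y, T x⟫ := hT.isSymmetric y x
    rw [h1]
    simpa using inner_re_symm (𝕜 := ℂ) y (T x)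
  have e3 : 4 * (‖x‖ * ‖T x‖) = (⟪T (x+y), x+y⟫).re - (⟪T (x-y), x-y⟫).re := by
    have h2 := congrArg Complex.re e1
    rw [Complex.sub_re, Complex.add_re] at h2
    have h3 : (2*⟪T x, y⟫).re = 2 * (⟪T x, y⟫).re := by
      simp [Complex.mul_re]
    have h4 : (2*⟪T y, x⟫).re = 2 * (⟪T y, x⟫).re := by
      simp [Complex.mul_re]
    rw [h2, h3, h4, e2, hre]
    ring
  have b1 : (⟪T (x+y), x+y⟫).re ≤ M * ‖x+y‖^2 :=
    le_trans (Complex.re_le_norm _) (h _)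
  have b2 : -(⟪T (x-y), x-y⟫).re ≤ M * ‖x-y‖^2 := by
    have h2 := le_trans (neg_le_abs _)
      (le_trans (Complex.abs_re_le_norm _) (h (x-y)))
    linarith
  have hpar := parallelogram_law_with_norm ℂ x y
  rw [hyn] at hpar
  have hsum : ‖x+y‖^2 + ‖x-y‖^2 = 4*‖x‖^2 := by nlinarith [hpar]
  have hdistr : M*(‖x+y‖^2 + ‖x-y‖^2) = M*‖x+y‖^2 + M*‖x-y‖^2 := by ring
  have hfour : 4*(‖x‖*‖T x‖) ≤ M*(4*‖x‖^2) := by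
    have h5 : M*(‖x+y‖^2 + ‖x-y‖^2) = M*(4*‖x‖^2) := by rw [hsum]
    linarith [b1, b2, e3]
  nlinarith [hfour, hxn]

set_option maxHeartbeats 1000000 in
lemma core_ineq (B : H →L[ℂ] H) (u : H) (hu : ‖u‖ = 1) {c ε : ℝ} (hc : 0 < c)
    (ha : 0 < ‖B‖) (hε : 0 < ε) (hε1 : ε ≤ ‖B + adjoint B‖ / 2) (hε2 : ε ≤ c / 2)
    (hε3 : ε ≤ c ^ 2 * ‖B + adjoint B‖ / (512 * ‖B‖ ^ 2))
    (ht : ‖B + adjoint B‖ - ε < (⟪(B + adjoint B) u, u⟫).re) :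
    ‖B + adjoint B‖ ≤ ‖B‖ + Real.sqrt ‖B * B‖ + c := by
  set T := B + adjoint B with hTdef
  set N := ‖T‖ with hNdef
  set a := ‖B‖ with hadef
  set s := Real.sqrt ‖B * B‖ with hsdef
  have hs0 : 0 ≤ s := Real.sqrt_nonneg _
  have hs2 : s ^ 2 = ‖B * B‖ := Real.sq_sqrt (norm_nonneg _)
  set t := (⟪T u, u⟫).re with htdef
  have hTu : ‖T u‖ ≤ N := by simpa [hu] using T.le_opNorm u
  have htN : t ≤ N := by
    have h1 : t ≤ ‖⟪T u, u⟫‖ := Complex.re_le_norm _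
    have h2 : ‖⟪T u, u⟫‖ ≤ ‖T u‖ * ‖u‖ := norm_inner_le_norm _ _
    rw [hu, mul_one] at h2
    linarith
  have hN0 : 0 < N := by linarith
  have ht0 : 0 < t := by linarith
  set δ := ‖T u - (t : ℂ) • u‖ with hδdef
  have hδ0 : 0 ≤ δ := norm_nonneg _
  have hδsq : δ ^ 2 ≤ 2 * N * ε := by
    have h1 : δ ^ 2 = ‖T u‖ ^ 2 - 2 * (t * t) + t ^ 2 := by
      rw [hδdef, @norm_sub_sq ℂ]
      have h2 : RCLike.re (⟪T u, (t:ℂ) • u⟫) = t * t := by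
        rw [inner_smul_right]
        simp only [RCLike.re_to_complex, Complex.re_ofReal_mul]
        rw [← htdef]
      rw [h2]
      have h3 : ‖(t:ℂ) • u‖ = t := by
        rw [norm_smul, Complex.norm_real, Real.norm_eq_abs, abs_of_pos ht0, hu, mul_one]
      rw [h3]
    nlinarith [hTu, norm_nonneg (T u), htN, ht]
  set z := (⟪B u, u⟫ : ℂ) with hzdef
  have hzre : 2 * z.re = t := by
    have h1 : (⟪T u, u⟫ : ℂ) = z + starRingEnd ℂ z := by
      rw [hTdef]
      simp only [add_apply, inner_add_left]
      rw [adjoint_inner_left, ← inner_conj_symm u (B u)]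
    rw [htdef, h1, Complex.add_re, Complex.conj_re]
    ring
  set m := ‖B u‖ with hmdef
  have hm1 : t / 2 ≤ m := by
    have h1 : z.re ≤ ‖z‖ := Complex.re_le_norm _
    have h2 : ‖z‖ ≤ ‖B u‖ * ‖u‖ := norm_inner_le_norm _ _
    rw [hu, mul_one] at h2
    linarith
  have hm0 : 0 < m := by linarith
  have hma : m ≤ a := by simpa [hu] using B.le_opNorm u
  -- ‖t•u − Bu‖ = m
  have hw : ‖(t : ℂ) • u - B u‖ = m := by
    have h1 : ‖(t : ℂ) • u - B u‖ ^ 2 = m ^ 2 := by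
      rw [@norm_sub_sq ℂ]
      have h2 : RCLike.re (⟪(t:ℂ) • u, B u⟫) = t * z.re := by
        rw [inner_smul_left]
        simp only [RCLike.re_to_complex, Complex.conj_ofReal, Complex.re_ofReal_mul]
        have h2b := inner_re_symm (𝕜 := ℂ) u (B u)
        simp only [RCLike.re_to_complex] at h2b
        rw [h2b]
      rw [h2]
      have h3 : ‖(t:ℂ) • u‖ = t := by
        rw [norm_smul, Complex.norm_real, Real.norm_eq_abs, abs_of_pos ht0, hu, mul_one]
      rw [h3, ← hmdef]
      nlinarith [hzre]
    have := congrArg Real.sqrt h1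
    rwa [Real.sqrt_sq (norm_nonneg _), Real.sqrt_sq (norm_nonneg _)] at this
  -- ‖B* u‖ ≤ m + δ
  have hBstar : ‖(adjoint B) u‖ ≤ m + δ := by
    have h1 : (adjoint B) u = ((t : ℂ) • u - B u) + (T u - (t : ℂ) • u) := by
      rw [hTdef]; simp only [add_apply]; abel
    calc ‖(adjoint B) u‖ ≤ ‖(t : ℂ) • u - B u‖ + ‖T u - (t : ℂ) • u‖ := by
          rw [h1]; exact norm_add_le _ _
      _ = m + δ := by rw [hw]
  -- t * m ≤ a * m + s^2 + 2 a δ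
  have hkey : t * m ≤ a * m + s ^ 2 + 2 * a * δ := by
    have h1 : ‖B ((t : ℂ) • u)‖ = t * m := by
      rw [map_smul, norm_smul, Complex.norm_real, Real.norm_eq_abs, abs_of_pos ht0]
    have h2 : B ((t : ℂ) • u) = (B (B u) + B ((adjoint B) u)) - B (T u - (t : ℂ) • u) := by
      rw [map_sub]
      have : B (T u) = B (B u) + B ((adjoint B) u) := by
        rw [hTdef]; simp only [add_apply, map_add]
      rw [this]; abel
    have h3 : ‖B (B u)‖ ≤ s ^ 2 := by
      have h3a := (B * B).le_opNorm u
      rw [hu, mul_one] at h3a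
      rw [hs2]
      calc ‖B (B u)‖ = ‖(B * B) u‖ := rfl
        _ ≤ ‖B * B‖ := h3a
    have h4 : ‖B ((adjoint B) u)‖ ≤ a * (m + δ) :=
      (B.le_opNorm _).trans (mul_le_mul_of_nonneg_left hBstar ha.le)
    have h5 : ‖B (T u - (t : ℂ) • u)‖ ≤ a * δ := B.le_opNorm _
    calc t * m = ‖B ((t : ℂ) • u)‖ := h1.symm
      _ ≤ ‖B (B u)‖ + ‖B ((adjoint B) u)‖ + ‖B (T u - (t : ℂ) • u)‖ := by
          rw [h2]; exact (norm_sub_le _ _).trans (by gcongr; exact norm_add_le _ _)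
      _ ≤ s ^ 2 + a * (m + δ) + a * δ := by gcongr
      _ = a * m + s ^ 2 + 2 * a * δ := by ring
  rcases le_or_gt m s with hms | hsm
  · -- t ≤ 2m ≤ m + s ≤ a + s
    linarith
  · have hδle : δ ≤ c * N / (16 * a) := by
      have key : 2 * N * ε ≤ (c * N / (16 * a)) ^ 2 := by
        have h1 : 2 * N * (c ^ 2 * N / (512 * a ^ 2)) = (c * N / (16 * a)) ^ 2 := by
          field_simp
          ring
        nlinarith [hε3, hN0]
      have h2 : δ ≤ Real.sqrt ((c * N / (16 * a)) ^ 2) := by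
        rw [← Real.sqrt_sq hδ0]
        exact Real.sqrt_le_sqrt (hδsq.trans key)
      rwa [Real.sqrt_sq (by positivity)] at h2
    have hst : s ^ 2 ≤ s * m := by nlinarith
    have hNm : N / 4 ≤ m := by linarith
    rcases le_or_gt t (a + s) with h5 | h5
    · linarith
    · have h3 : (t - a - s) * m ≤ 2 * a * δ := by nlinarith [hkey, hst]
      have h4 : 2 * a * δ ≤ c * N / 8 := by
        calc 2 * a * δ ≤ 2 * a * (c * N / (16 * a)) := by
              have := mul_le_mul_of_nonneg_left hδle (by positivity : (0:ℝ) ≤ 2 * a)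
              linarith
          _ = c * N / 8 := by field_simp; ring
      have h6 : (t - a - s) * (N / 4) ≤ c * N / 8 := by nlinarith [h3, h4, hNm]
      have h7 : t - a - s ≤ c / 2 := by
        have h8 : t - a - s ≤ (c * N / 8) / (N / 4) := by
          rw [le_div_iff₀ (by positivity)]
          linarith [h6]
        have h9 : (c * N / 8) / (N / 4) = c / 2 := by
          field_simp
          ring
        linarith [h8, h9.le, h9.ge]
      linarith

lemma key_ineq (B : H →L[ℂ] H) : ‖B + adjoint B‖ ≤ ‖B‖ + Real.sqrt ‖B * B‖ := by
  have hs0 : 0 ≤ Real.sqrt ‖B * B‖ := Real.sqrt_nonneg _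
  refine le_of_forall_pos_le_add fun c hc => ?_
  rcases le_or_gt ‖B + adjoint B‖ ‖B‖ with hN | hN
  · linarith
  have ha : 0 < ‖B‖ := by
    rcases eq_or_lt_of_le (norm_nonneg B) with h | h
    · exfalso
      have hB0 : B = 0 := by rwa [eq_comm, norm_eq_zero] at h
      rw [hB0] at hN
      simp at hN
    · exact h
  set T := B + adjoint B with hTdef
  have hT : IsSelfAdjoint T := by
    rw [isSelfAdjoint_iff']
    rw [hTdef, map_add, adjoint_adjoint]
    exact add_comm _ _
  have hN0 : 0 < ‖T‖ := lt_of_le_of_lt (norm_nonneg B) hN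
  set ε := min (‖T‖ / 2) (min (c / 2) (c ^ 2 * ‖T‖ / (512 * ‖B‖ ^ 2))) with hεdef
  have hε : 0 < ε := by
    apply lt_min (by positivity)
    exact lt_min (by positivity) (by positivity)
  have hε1 : ε ≤ ‖T‖ / 2 := min_le_left _ _
  have hε2 : ε ≤ c / 2 := (min_le_right _ _).trans (min_le_left _ _)
  have hε3 : ε ≤ c ^ 2 * ‖T‖ / (512 * ‖B‖ ^ 2) := (min_le_right _ _).trans (min_le_right _ _)
  -- find a near-maximizing vector
  have hnot : ¬ ∀ x : H, ‖⟪T x, x⟫‖ ≤ (‖T‖ - ε) * ‖x‖ ^ 2 := by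
    intro hall
    have := aux_sa_norm_le T hT (M := ‖T‖ - ε) (by linarith) hall
    linarith
  push_neg at hnot
  obtain ⟨x, hx⟩ := hnot
  have hx0 : x ≠ 0 := by
    rintro rfl
    simp at hx
  have hxn : (0:ℝ) < ‖x‖ := norm_pos_iff.mpr hx0
  set u : H := ((‖x‖⁻¹ : ℝ) : ℂ) • x with hudef
  have hu : ‖u‖ = 1 := by
    rw [hudef, norm_smul, Complex.norm_real, Real.norm_eq_abs, abs_of_pos (by positivity)]
    field_simp
  have hui : ‖T‖ - ε < ‖⟪T u, u⟫‖ := by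
    have h1 : ⟪T u, u⟫ = ((‖x‖⁻¹ : ℝ) : ℂ) * (starRingEnd ℂ ((‖x‖⁻¹ : ℝ) : ℂ)) * ⟪T x, x⟫ := by
      rw [hudef, map_smul, inner_smul_left, inner_smul_right]
      ring
    rw [h1]
    rw [norm_mul, norm_mul, RCLike.norm_conj]
    rw [Complex.norm_real, Real.norm_eq_abs, abs_of_pos (by positivity)]
    have h2 : (‖T‖ - ε) * ‖x‖ ^ 2 < ‖⟪T x, x⟫‖ := hx
    have hxne : ‖x‖ ≠ 0 := ne_of_gt hxn
    have h3 : ‖x‖⁻¹ * ‖x‖⁻¹ * ((‖T‖ - ε) * ‖x‖ ^ 2) = ‖T‖ - ε := by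
      rw [show ‖x‖⁻¹ * ‖x‖⁻¹ * ((‖T‖ - ε) * ‖x‖ ^ 2)
          = (‖T‖ - ε) * ((‖x‖⁻¹ * ‖x‖) * (‖x‖⁻¹ * ‖x‖)) from by ring,
        inv_mul_cancel₀ hxne, mul_one, mul_one]
    calc ‖T‖ - ε = ‖x‖⁻¹ * ‖x‖⁻¹ * ((‖T‖ - ε) * ‖x‖ ^ 2) := h3.symm
      _ < ‖x‖⁻¹ * ‖x‖⁻¹ * ‖⟪T x, x⟫‖ := by
          apply mul_lt_mul_of_pos_left h2
          positivity
  -- the inner product is real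
  have hreal : ‖⟪T u, u⟫‖ = |(⟪T u, u⟫).re| := by
    have h1 : starRingEnd ℂ ⟪T u, u⟫ = ⟪T u, u⟫ :=
      (inner_conj_symm u (T u)).trans (hT.isSymmetric u u).symm
    have h3 : (⟪T u, u⟫).im = 0 := by
      have h4 := congrArg Complex.im h1
      rw [Complex.conj_im] at h4
      linarith
    rw [Complex.norm_def, Complex.normSq_apply, h3]
    rw [mul_zero, add_zero, ← Real.sqrt_sq_eq_abs, sq]
  rcases le_or_gt 0 ((⟪T u, u⟫).re) with hsgn | hsgn
  · have ht : ‖T‖ - ε < (⟪T u, u⟫).re := by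
      rwa [hreal, abs_of_nonneg hsgn] at hui
    exact core_ineq B u hu hc ha hε hε1 hε2 hε3 ht
  · -- apply core to -B
    have hBneg : (-B) + adjoint (-B) = -T := by
      rw [map_neg, hTdef]
      abel
    have hnn : ‖(-B) + adjoint (-B)‖ = ‖T‖ := by rw [hBneg, norm_neg]
    have hmm : ‖(-B) * (-B)‖ = ‖B * B‖ := by rw [neg_mul_neg]
    have ht : ‖(-B) + adjoint (-B)‖ - ε < (⟪((-B) + adjoint (-B)) u, u⟫).re := by
      rw [hnn, hBneg]
      have h1 : (⟪(-T) u, u⟫) = -⟪T u, u⟫ := by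
        simp [inner_neg_left]
      rw [h1, Complex.neg_re]
      rwa [hreal, abs_of_neg hsgn] at hui
    have ha' : 0 < ‖-B‖ := by rwa [norm_neg]
    have hε1' : ε ≤ ‖(-B) + adjoint (-B)‖ / 2 := by rw [hnn]; exact hε1
    have hε3' : ε ≤ c ^ 2 * ‖(-B) + adjoint (-B)‖ / (512 * ‖-B‖ ^ 2) := by
      rw [hnn, norm_neg]; exact hε3
    have hfin := core_ineq (-B) u hu hc ha' hε hε1' hε2 hε3' ht
    rwa [hnn, norm_neg, hmm] at hfin

theorem stmt14' (A : H →L[ℂ] H) :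
    (⨆ x : {x : H // ‖x‖ = 1}, ‖(inner ℂ (A x.1) x.1 : ℂ)‖) ≤ (1/2) * ‖A‖ + (1/2) * Real.sqrt ‖A * A‖ := by
  have h0 : (0:ℝ) ≤ (1/2) * ‖A‖ + (1/2) * Real.sqrt ‖A * A‖ := by positivity
  refine Real.iSup_le (fun p => ?_) h0
  obtain ⟨x, hx⟩ := p
  set z := (inner ℂ (A x) x : ℂ) with hzdef
  rcases eq_or_ne z 0 with hz | hz
  · rw [hz, norm_zero]
    exact h0
  · set c : ℂ := z / (‖z‖ : ℂ) with hcdef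
    have hzn : (0:ℝ) < ‖z‖ := norm_pos_iff.mpr hz
    have hzne : (‖z‖ : ℂ) ≠ 0 := by
      simp only [ne_eq, Complex.ofReal_eq_zero]
      exact ne_of_gt hzn
    have hc : ‖c‖ = 1 := by
      rw [hcdef, norm_div, Complex.norm_real, Real.norm_eq_abs, abs_of_pos hzn]
      field_simp
    set B := c • A with hBdef
    have hB1 : ‖B‖ = ‖A‖ := by rw [hBdef, norm_smul, hc, one_mul]
    have hB2 : ‖B * B‖ = ‖A * A‖ := by
      have h1 : B * B = (c * c) • (A * A) := by
        rw [hBdef, smul_mul_smul_comm]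
      rw [h1, norm_smul, norm_mul, hc, one_mul, one_mul]
    have hconj : (starRingEnd ℂ) z * z = ((‖z‖ : ℂ)) ^ 2 := by
      have h1 : (starRingEnd ℂ) z * z = z * (starRingEnd ℂ) z := mul_comm _ _
      rw [h1, Complex.mul_conj]
      rw [Complex.normSq_eq_norm_sq]
      push_cast
      ring
    have hzB : (inner ℂ (B x) x : ℂ) = (‖z‖ : ℂ) := by
      rw [hBdef]
      simp only [ContinuousLinearMap.smul_apply, inner_smul_left]
      rw [← hzdef, hcdef, map_div₀, Complex.conj_ofReal, div_mul_eq_mul_div, hconj]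
      rw [sq]
      field_simp
    -- 2‖z‖ ≤ ‖B + adjoint B‖
    have hTx : 2 * ‖z‖ ≤ ‖B + adjoint B‖ := by
      have h1 : (inner ℂ ((B + adjoint B) x) x : ℂ) = 2 * (‖z‖ : ℂ) := by
        simp only [ContinuousLinearMap.add_apply, inner_add_left]
        rw [adjoint_inner_left, ← inner_conj_symm x (B x), hzB, Complex.conj_ofReal]
        ring
      have h2 : 2 * ‖z‖ ≤ ‖(inner ℂ ((B + adjoint B) x) x : ℂ)‖ := by
        rw [h1]
        rw [show (2 : ℂ) * (‖z‖ : ℂ) = ((2 * ‖z‖ : ℝ) : ℂ) from by push_cast; ring]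
        rw [Complex.norm_real, Real.norm_eq_abs, abs_of_nonneg (by positivity)]
      have h3 : ‖(inner ℂ ((B + adjoint B) x) x : ℂ)‖ ≤ ‖(B + adjoint B) x‖ * ‖x‖ :=
        norm_inner_le_norm _ _
      have h4 : ‖(B + adjoint B) x‖ ≤ ‖B + adjoint B‖ := by
        simpa [hx] using (B + adjoint B).le_opNorm x
      rw [hx, mul_one] at h3
      linarith
    have h5 := key_ineq B
    rw [hB1, hB2] at h5
    linarith

end Helpers

theorem stmt14 {H : Type*} [NormedAddCommGroup H] [InnerProductSpace ℂ H] [CompleteSpace H]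
    (A : H →L[ℂ] H) :
    numRadius A ≤ (1/2) * ‖A‖ + (1/2) * Real.sqrt ‖A * A‖ :=
  stmt14' A
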